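/- Let G be a finite abelian group of order q, H a subgroup of G, M a maximal proper subgroup of H, and q̄ = |H|/|M|. Let T_H be a transversal of H in G, fix t_H ∈ T_H, let T_M be a transversal of M in H, and let W̄ be the induced channel on the q̄ cosets {t_H + t_M + M : t_M ∈ T_M}. Let ε > 0. If Z_d(W) < ε for all d ∈ H \ M, then the average Bhattacharyya parameter of W̄ satisfies Z(W̄) ≤ ( |M|·|H|·|G| / (|H| − |M|) )·ε. -/

import Mathlib

open Finset

set_option maxHeartbeats 1000000

/-- Bhattacharyya distance between two input symbols. -/
noncomputable def Zpair {G Y : Type} [Fintype Y] (W : G → Y → ℝ) (x x' : G) : ℝ :=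
  ∑ y : Y, Real.sqrt (W x y * W x' y)

/-- `Z_d(W) = (1/q)·Σ_{x∈G} Z(W_{x,x+d})`. -/
noncomputable def Zd {G Y : Type} [Fintype G] [Fintype Y] [Add G]
    (W : G → Y → ℝ) (d : G) : ℝ :=
  (1 / (Fintype.card G : ℝ)) * ∑ x : G, Zpair W x (x + d)

/-- The induced channel `W̄` on cosets of `M` inside the coset `t_H + H`, with inputs
represented by elements `t` of a transversal of `M`:
`W̄(y | t_H + t + M) = (1/|M|)·Σ_{m∈M} W(y | t_H + t + m)`. -/
noncomputable def inducedChannel {G Y : Type} [Fintype G] [AddCommGroup G] [DecidableEq G]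
    (W : G → Y → ℝ) (tH : G) (M : AddSubgroup G) [DecidablePred (· ∈ M)] :
    G → Y → ℝ :=
  fun t y => (1 / (Nat.card M : ℝ)) *
    ∑ m ∈ Finset.univ.filter (fun m : G => m ∈ M), W (tH + t + m) y

lemma my_sqrt_add_le {a b : ℝ} (ha : 0 ≤ a) (hb : 0 ≤ b) :
    Real.sqrt (a + b) ≤ Real.sqrt a + Real.sqrt b := by
  have h1 := Real.sq_sqrt ha
  have h2 := Real.sq_sqrt hb
  have h3 := Real.sqrt_nonneg a
  have h4 := Real.sqrt_nonneg b
  rw [show Real.sqrt a + Real.sqrt b = Real.sqrt ((Real.sqrt a + Real.sqrt b)^2) from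
    (Real.sqrt_sq (by positivity)).symm]
  apply Real.sqrt_le_sqrt
  nlinarith [mul_nonneg h3 h4]

lemma my_sqrt_sum_le {ι : Type*} (s : Finset ι) (f : ι → ℝ) (hf : ∀ i ∈ s, 0 ≤ f i) :
    Real.sqrt (∑ i ∈ s, f i) ≤ ∑ i ∈ s, Real.sqrt (f i) := by
  induction s using Finset.cons_induction with
  | empty => simp
  | cons a s ha ih =>
    simp only [Finset.sum_cons]
    calc Real.sqrt (f a + ∑ i ∈ s, f i) ≤ Real.sqrt (f a) + Real.sqrt (∑ i ∈ s, f i) :=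
          my_sqrt_add_le (hf a (Finset.mem_cons_self a s))
            (Finset.sum_nonneg fun i hi => hf i (Finset.mem_cons_of_mem hi))
      _ ≤ _ := by gcongr with i hi; exact ih fun i hi => hf i (Finset.mem_cons_of_mem hi)

lemma Zpair_nonneg {G Y : Type} [Fintype Y] (W : G → Y → ℝ) (x x' : G) :
    0 ≤ Zpair W x x' :=
  Finset.sum_nonneg fun _ _ => Real.sqrt_nonneg _

/-- if `Z_d(W) < ε` for all `d ∈ H \ M`, then the average Bhattacharyya
parameter of the induced channel `W̄` is at most `(|M|·|H|·|G|/(|H|−|M|))·ε`. -/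
theorem avg_bhattacharyya_inducedChannel_le
    {G Y : Type} [Fintype G] [AddCommGroup G] [DecidableEq G] [Fintype Y]
    (W : G → Y → ℝ) (hW0 : ∀ x y, 0 ≤ W x y) (hW1 : ∀ x, ∑ y, W x y = 1)
    (H M : AddSubgroup G) [DecidablePred (· ∈ M)]
    (hMH : M < H)
    (hMmax : ∀ K : AddSubgroup G, M ≤ K → K ≤ H → K = M ∨ K = H)
    (TH : Finset G) (hTH : ∀ g : G, ∃! t, t ∈ TH ∧ g - t ∈ H) (tH : G) (htH : tH ∈ TH)
    (TM : Finset G) (hTMsub : (TM : Set G) ⊆ (H : Set G))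
    (hTM : ∀ h ∈ H, ∃! t, t ∈ TM ∧ h - t ∈ M)
    (ε : ℝ) (hε : 0 < ε)
    (hZ : ∀ d : G, d ∈ (H : Set G) \ (M : Set G) → Zd W d < ε) :
    (1 / (((Nat.card H : ℝ) / (Nat.card M : ℝ)) *
        ((Nat.card H : ℝ) / (Nat.card M : ℝ) - 1))) *
      ∑ t ∈ TM, ∑ t' ∈ TM.erase t, Zpair (inducedChannel W tH M) t t' ≤
    ((Nat.card M : ℝ) * (Nat.card H : ℝ) * (Fintype.card G : ℝ) /
        ((Nat.card H : ℝ) - (Nat.card M : ℝ))) * ε := by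
  classical
  set Mf : Finset G := Finset.univ.filter (fun m : G => m ∈ M) with hMf
  set Hf : Finset G := Finset.univ.filter (fun m : G => m ∈ H) with hHf
  -- cardinalities
  have hMcard : Nat.card M = Mf.card := by
    rw [Nat.card_eq_fintype_card, hMf, Fintype.card_subtype]
  have hHcard : Nat.card H = Hf.card := by
    rw [Nat.card_eq_fintype_card, hHf, Fintype.card_subtype]
  set m : ℝ := (Nat.card M : ℝ) with hm
  set h : ℝ := (Nat.card H : ℝ) with hh
  set q : ℝ := (Fintype.card G : ℝ) with hq
  have hq1 : (1 : ℝ) ≤ q := by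
    rw [hq]; exact_mod_cast Fintype.card_pos
  have hm1 : (1 : ℝ) ≤ m := by
    rw [hm]; exact_mod_cast Nat.card_pos (α := M)
  have hm0 : (0 : ℝ) < m := lt_of_lt_of_le one_pos hm1
  have hmh : m < h := by
    have hsub' : Mf ⊆ Hf := by
      intro x hx
      rw [hMf, Finset.mem_filter] at hx
      rw [hHf, Finset.mem_filter]
      exact ⟨Finset.mem_univ _, hMH.le hx.2⟩
    obtain ⟨x, hxH, hxM⟩ := SetLike.exists_of_lt hMH
    have hlt : Mf.card < Hf.card := by
      apply Finset.card_lt_card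
      refine ⟨hsub', fun hcon => hxM ?_⟩
      have : x ∈ Mf := hcon (by rw [hHf, Finset.mem_filter]; exact ⟨Finset.mem_univ _, hxH⟩)
      rw [hMf, Finset.mem_filter] at this
      exact this.2
    rw [hm, hh, hMcard, hHcard]
    exact_mod_cast hlt
  have hh0 : (0 : ℝ) < h := lt_trans hm0 hmh
  -- |TM| * |M| ≤ |H|
  have hTMcard : TM.card * Nat.card M ≤ Nat.card H := by
    rw [hMcard, hHcard, ← Finset.card_product]
    apply Finset.card_le_card_of_injOn (fun p => p.1 + p.2)
    · rintro ⟨t, mm⟩ hp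
      rw [Finset.mem_coe, Finset.mem_product] at hp
      obtain ⟨ht, hmm⟩ := hp
      rw [hMf, Finset.mem_filter] at hmm
      rw [Finset.mem_coe, hHf, Finset.mem_filter]
      exact ⟨Finset.mem_univ _, H.add_mem (hTMsub ht) (hMH.le hmm.2)⟩
    · rintro ⟨t1, m1⟩ hp1 ⟨t2, m2⟩ hp2 heq
      simp only [Finset.coe_product, Set.mem_prod, Finset.mem_coe] at hp1 hp2
      obtain ⟨ht1, hm1'⟩ := hp1
      obtain ⟨ht2, hm2'⟩ := hp2
      rw [hMf, Finset.mem_filter] at hm1' hm2'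
      simp only at heq
      have hg : t1 + m1 ∈ H := H.add_mem (hTMsub ht1) (hMH.le hm1'.2)
      obtain ⟨t, _, huniq⟩ := hTM (t1 + m1) hg
      have e1 : t1 = t := huniq t1 ⟨ht1, by simpa using hm1'.2⟩
      have e2 : t2 = t := huniq t2 ⟨ht2, by rw [heq]; simpa using hm2'.2⟩
      have et : t1 = t2 := e1.trans e2.symm
      have em : m1 = m2 := by
        rw [et] at heq
        exact add_left_cancel heq
      simp [et, em]
  -- key pointwise bound: Zpair W x x' ≤ q * ε whenever x' - x ∈ H \ M
  have key : ∀ x x' : G, x' - x ∈ (H : Set G) \ (M : Set G) → Zpair W x x' ≤ q * ε := by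
    intro x x' hd
    have hZd := hZ (x' - x) hd
    have hle : Zpair W x x' ≤ ∑ z : G, Zpair W z (z + (x' - x)) := by
      have hx : Zpair W x x' = Zpair W x (x + (x' - x)) := by
        congr 1; abel
      rw [hx]
      exact Finset.single_le_sum (f := fun z => Zpair W z (z + (x' - x)))
        (fun z _ => Zpair_nonneg W z _) (Finset.mem_univ x)
    have hq0 : (0 : ℝ) < q := lt_of_lt_of_le one_pos hq1
    have hqe : ∑ z : G, Zpair W z (z + (x' - x)) = q * Zd W (x' - x) := by
      rw [Zd]; field_simp; rw [hq]
    calc Zpair W x x' ≤ q * Zd W (x' - x) := by rw [← hqe]; exact hle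
      _ ≤ q * ε := by nlinarith
  -- difference of distinct transversal elements is in H \ M
  have hdiff : ∀ t ∈ TM, ∀ t' ∈ TM, t ≠ t' → ∀ m1 ∈ Mf, ∀ m2 ∈ Mf,
      ((tH + t' + m2) - (tH + t + m1)) ∈ (H : Set G) \ (M : Set G) := by
    intro t ht t' ht' hne m1 hm1' m2 hm2'
    rw [hMf, Finset.mem_filter] at hm1' hm2'
    have h1 : m1 ∈ M := hm1'.2
    have h2 : m2 ∈ M := hm2'.2
    have hdeq : (tH + t' + m2) - (tH + t + m1) = (t' - t) + (m2 - m1) := by abel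
    have htH' : t' - t ∈ H := H.sub_mem (hTMsub ht') (hTMsub ht)
    have hmM : m2 - m1 ∈ M := M.sub_mem h2 h1
    rw [hdeq]
    constructor
    · exact H.add_mem htH' (hMH.le hmM)
    · intro hcon
      have htM : t' - t ∈ M := by
        have := M.sub_mem hcon hmM
        simpa using this
      obtain ⟨s, _, huniq⟩ := hTM t' (hTMsub ht')
      have e1 : t' = s := huniq t' ⟨ht', by simpa using M.zero_mem⟩
      have e2 : t = s := huniq t ⟨ht, htM⟩
      exact hne (e2.trans e1.symm)
  -- bound on Zpair of induced channel
  have hZbar : ∀ t ∈ TM, ∀ t' ∈ TM, t ≠ t' →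
      Zpair (inducedChannel W tH M) t t' ≤ m * q * ε := by
    intro t ht t' ht' hne
    have hptwise : ∀ y : Y, Real.sqrt (inducedChannel W tH M t y * inducedChannel W tH M t' y)
        ≤ (1 / m) * ∑ m1 ∈ Mf, ∑ m2 ∈ Mf,
            Real.sqrt (W (tH + t + m1) y * W (tH + t' + m2) y) := by
      intro y
      simp only [inducedChannel]
      set A := ∑ m1 ∈ Mf, W (tH + t + m1) y with hA
      set B := ∑ m2 ∈ Mf, W (tH + t' + m2) y with hB
      have hA0 : 0 ≤ A := Finset.sum_nonneg fun _ _ => hW0 _ _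
      have hB0 : 0 ≤ B := Finset.sum_nonneg fun _ _ => hW0 _ _
      have e1 : (1 / m * A) * (1 / m * B) = (1 / m) ^ 2 * (A * B) := by ring
      rw [e1, Real.sqrt_mul (by positivity), Real.sqrt_sq (by positivity)]
      apply mul_le_mul_of_nonneg_left _ (by positivity : (0:ℝ) ≤ 1 / m)
      have e2 : A * B = ∑ m1 ∈ Mf, ∑ m2 ∈ Mf, W (tH + t + m1) y * W (tH + t' + m2) y := by
        rw [hA, hB, Finset.sum_mul_sum]
      rw [e2]
      calc Real.sqrt (∑ m1 ∈ Mf, ∑ m2 ∈ Mf, W (tH + t + m1) y * W (tH + t' + m2) y)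
          ≤ ∑ m1 ∈ Mf, Real.sqrt (∑ m2 ∈ Mf, W (tH + t + m1) y * W (tH + t' + m2) y) :=
            my_sqrt_sum_le _ _ (fun i _ => Finset.sum_nonneg fun j _ =>
              mul_nonneg (hW0 _ _) (hW0 _ _))
        _ ≤ ∑ m1 ∈ Mf, ∑ m2 ∈ Mf, Real.sqrt (W (tH + t + m1) y * W (tH + t' + m2) y) := by
            apply Finset.sum_le_sum
            intro i _
            exact my_sqrt_sum_le _ _ (fun j _ => mul_nonneg (hW0 _ _) (hW0 _ _))
    have step1 : Zpair (inducedChannel W tH M) t t' ≤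
        (1 / m) * ∑ m1 ∈ Mf, ∑ m2 ∈ Mf, Zpair W (tH + t + m1) (tH + t' + m2) := by
      calc Zpair (inducedChannel W tH M) t t'
          ≤ ∑ y : Y, (1 / m) * ∑ m1 ∈ Mf, ∑ m2 ∈ Mf,
              Real.sqrt (W (tH + t + m1) y * W (tH + t' + m2) y) :=
            Finset.sum_le_sum fun y _ => hptwise y
        _ = (1 / m) * ∑ m1 ∈ Mf, ∑ m2 ∈ Mf, Zpair W (tH + t + m1) (tH + t' + m2) := by
            rw [← Finset.mul_sum]
            congr 1
            rw [Finset.sum_comm]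
            refine Finset.sum_congr rfl fun m1 _ => ?_
            rw [Finset.sum_comm]
            rfl
    have hMfcard : (Mf.card : ℝ) = m := by rw [hm, hMcard]
    have step2 : ∑ m1 ∈ Mf, ∑ m2 ∈ Mf, Zpair W (tH + t + m1) (tH + t' + m2) ≤
        m * m * (q * ε) := by
      calc ∑ m1 ∈ Mf, ∑ m2 ∈ Mf, Zpair W (tH + t + m1) (tH + t' + m2)
          ≤ ∑ m1 ∈ Mf, ∑ m2 ∈ Mf, q * ε := by
            apply Finset.sum_le_sum
            intro m1 hm1'
            apply Finset.sum_le_sum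
            intro m2 hm2'
            exact key _ _ (hdiff t ht t' ht' hne m1 hm1' m2 hm2')
        _ = m * m * (q * ε) := by
            rw [Finset.sum_const, Finset.sum_const, smul_smul, nsmul_eq_mul,
              Nat.cast_mul, hMfcard]
    calc Zpair (inducedChannel W tH M) t t'
        ≤ (1 / m) * ∑ m1 ∈ Mf, ∑ m2 ∈ Mf, Zpair W (tH + t + m1) (tH + t' + m2) := step1
      _ ≤ (1 / m) * (m * m * (q * ε)) :=
          mul_le_mul_of_nonneg_left step2 (by positivity)
      _ = m * q * ε := by field_simp
  -- bound the double sum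
  set T : ℝ := (TM.card : ℝ) with hT
  set T1 : ℝ := ((TM.card - 1 : ℕ) : ℝ) with hT1
  have hsum : ∑ t ∈ TM, ∑ t' ∈ TM.erase t, Zpair (inducedChannel W tH M) t t' ≤
      T * (T1 * (m * q * ε)) := by
    calc ∑ t ∈ TM, ∑ t' ∈ TM.erase t, Zpair (inducedChannel W tH M) t t'
        ≤ ∑ t ∈ TM, T1 * (m * q * ε) := by
          apply Finset.sum_le_sum
          intro t ht
          calc ∑ t' ∈ TM.erase t, Zpair (inducedChannel W tH M) t t'
              ≤ ∑ t' ∈ TM.erase t, m * q * ε := by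
                apply Finset.sum_le_sum
                intro t' ht'
                have hne : t ≠ t' := (Finset.ne_of_mem_erase ht').symm
                exact hZbar t ht t' (Finset.mem_of_mem_erase ht') hne
            _ = T1 * (m * q * ε) := by
                rw [Finset.sum_const, Finset.card_erase_of_mem ht, nsmul_eq_mul, hT1]
      _ = T * (T1 * (m * q * ε)) := by rw [Finset.sum_const, nsmul_eq_mul, hT]
  -- final arithmetic
  have hT1T : T1 ≤ T := by rw [hT1, hT]; exact_mod_cast Nat.sub_le _ _
  have hT0 : 0 ≤ T := by positivity
  have hT10 : 0 ≤ T1 := by positivity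
  have hTm : T * m ≤ h := by
    rw [hT, hm, hh]; exact_mod_cast hTMcard
  have hhm0 : (0 : ℝ) < h - m := by linarith
  have hc : h / m * (h / m - 1) = h * (h - m) / m ^ 2 := by
    rw [eq_div_iff (by positivity)]
    field_simp
  rw [hc]
  have hden : (0 : ℝ) < h * (h - m) / m ^ 2 := by positivity
  have hnn : 0 ≤ 1 / (h * (h - m) / m ^ 2) := by positivity
  have h1 : T1 * T * m ^ 2 ≤ h ^ 2 := by
    have hTT : T * m * (T * m) ≤ h * h := mul_le_mul hTm hTm (by positivity) hh0.le
    have hstep : T1 * (T * m ^ 2) ≤ T * (T * m ^ 2) :=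
      mul_le_mul_of_nonneg_right hT1T (by positivity)
    nlinarith
  calc (1 / (h * (h - m) / m ^ 2)) *
        ∑ t ∈ TM, ∑ t' ∈ TM.erase t, Zpair (inducedChannel W tH M) t t'
      ≤ (1 / (h * (h - m) / m ^ 2)) * (T * (T1 * (m * q * ε))) :=
        mul_le_mul_of_nonneg_left hsum hnn
    _ = m ^ 2 * (T * (T1 * (m * q * ε))) / (h * (h - m)) := by
        rw [one_div, inv_div]; ring
    _ ≤ m * h * q / (h - m) * ε := by
        rw [div_le_iff₀ (by positivity), div_mul_eq_mul_div, div_mul_eq_mul_div,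
          le_div_iff₀ (by positivity)]
        nlinarith [mul_le_mul_of_nonneg_right h1
          (show (0:ℝ) ≤ m * (q * (ε * (h - m))) by positivity)]
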